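/- (Classification of $H_{ij}$-periodic $p$-harmonic functions) Let $g : \mathbb{Z} \to \mathbb{R}$ and suppose $u = g \circ \phi$ is $p$-harmonic ($\Delta_p u(x) = 0$ for all $x \in G_k$). Then there exists a constant $c \in \mathbb{R}$ such that $g(n+1) - g(n) = c \cdot \varrho_n$ for every $n \in \mathbb{Z}$; in particular, $u$ is determined by the two real parameters $g(0)$ and $c$. -/

import Mathlib

open scoped BigOperators

noncomputable section

/-- The group representation `G_k` of the Cayley tree of order `k`:
the free product of `k+1` copies of the cyclic group of order two. -/
abbrev G (k : ℕ) : Type := Monoid.CoprodI (fun _ : Fin (k + 1) => Multiplicative (ZMod 2))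

/-- The generators `a_0, ..., a_k` of `G_k`. -/
def gen (k : ℕ) (s : Fin (k + 1)) : G k :=
  Monoid.CoprodI.of (i := s) (Multiplicative.ofAdd (1 : ZMod 2))

/-- `φ_p(t) = |t|^(p-2) t` (real powers). -/
noncomputable def phiP (p t : ℝ) : ℝ := |t| ^ (p - 2) * t

/-- The discrete `p`-Laplacian on the Cayley tree with resistances `r`:
`Δ_p u (x) = ∑_{s=0}^{k} φ_p ((u (x a_s) - u x) / r (x, x a_s))`. -/
noncomputable def pLap (k : ℕ) (p : ℝ) (r : G k × G k → ℝ) (u : G k → ℝ) (x : G k) : ℝ :=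
  ∑ s : Fin (k + 1), phiP p ((u (x * gen k s) - u x) / r (x, x * gen k s))

/-- A function `u : G_k → ℝ` is `H`-periodic if `u (y x) = u x` for all `y ∈ H`, `x ∈ G_k`. -/
def IsPeriodic (k : ℕ) (H : Subgroup (G k)) (u : G k → ℝ) : Prop :=
  ∀ y ∈ H, ∀ x : G k, u (y * x) = u x

/-- The coset index `φ(x) = ρ(x)(0)` associated to a permutation action `ρ` of `G_k` on `ℤ`. -/
def cosetIdx {k : ℕ} (ρ : G k →* Equiv.Perm ℤ) (x : G k) : ℤ := ρ x 0

lemma phiP_zero (p : ℝ) : phiP p 0 = 0 := by simp [phiP]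

lemma phiP_neg (p t : ℝ) : phiP p (-t) = - phiP p t := by
  simp [phiP, abs_neg, mul_neg]

lemma phiP_of_pos {p t : ℝ} (ht : 0 < t) : phiP p t = t ^ (p - 1) := by
  rw [phiP, abs_of_pos ht, ← Real.rpow_add_one ht.ne' (p - 2)]
  congr 1
  ring

lemma phiP_strictMono {p : ℝ} (hp1 : 1 < p) : StrictMono (phiP p) := by
  have hpos : ∀ t : ℝ, 0 < t → 0 < phiP p t := by
    intro t ht
    rw [phiP_of_pos ht]
    exact Real.rpow_pos_of_pos ht _
  have hnn : ∀ a b : ℝ, 0 ≤ a → a < b → phiP p a < phiP p b := by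
    intro a b ha hab
    rcases eq_or_lt_of_le ha with h0 | h0
    · rw [← h0, phiP_zero]
      exact hpos b (h0 ▸ hab)
    · rw [phiP_of_pos h0, phiP_of_pos (h0.trans hab)]
      exact Real.rpow_lt_rpow h0.le hab (by linarith)
  intro a b hab
  rcases le_or_gt 0 a with ha | ha
  · exact hnn a b ha hab
  · rcases le_or_gt b 0 with hb | hb
    · have := hnn (-b) (-a) (by linarith) (by linarith)
      rw [phiP_neg, phiP_neg] at this
      linarith
    · have h1 : phiP p a < 0 := by
        have := hpos (-a) (by linarith)
        rw [phiP_neg] at this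
        linarith
      exact h1.trans (hpos b hb)

lemma phiP_add_eq_zero {p a b : ℝ} (hp1 : 1 < p) (h : phiP p a + phiP p b = 0) :
    a = -b := by
  have : phiP p a = phiP p (-b) := by rw [phiP_neg]; linarith
  exact (phiP_strictMono hp1).injective this

theorem stmt12 (k : ℕ) (hk : 1 ≤ k) (p : ℝ) (hp1 : 1 < p)
    (r : G k × G k → ℝ) (hr_symm : ∀ x y : G k, r (x, y) = r (y, x)) (hr_pos : ∀ x y : G k, 0 < r (x, y))
    (i j : Fin (k + 1)) (hij : i ≠ j)
    (ρ : G k →* Equiv.Perm ℤ)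
    (hρi : ∀ n : ℤ, ρ (gen k i) n = 1 - n)
    (hρj : ∀ n : ℤ, ρ (gen k j) n = -1 - n)
    (hρs : ∀ s : Fin (k + 1), s ≠ i → s ≠ j → ρ (gen k s) = 1)
    (ϱ : ℤ → ℝ) (hϱ_pos : ∀ n : ℤ, 0 < ϱ n)
    (hrϱ : ∀ x y : G k, cosetIdx ρ y = cosetIdx ρ x + 1 → r (x, y) = ϱ (cosetIdx ρ x))
    (g : ℤ → ℝ) (hharm : ∀ x : G k, pLap k p r (fun x => g (cosetIdx ρ x)) x = 0) :
    ∃ c : ℝ, ∀ n : ℤ, g (n + 1) - g n = c * ϱ n := by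
  classical
  -- Step A: every ρ x is an affine map with slope ±1
  have haff : ∀ x : G k, ∃ ε : ℤ, (ε = 1 ∨ ε = -1) ∧ ∀ n : ℤ, ρ x n = ε * n + ρ x 0 := by
    intro x
    induction x using Monoid.CoprodI.induction_on with
    | one => exact ⟨1, Or.inl rfl, by simp⟩
    | of s m =>
      have hm : m = 1 ∨ m = Multiplicative.ofAdd (1 : ZMod 2) := by revert m; decide
      rcases hm with hm | hm
      · subst hm; rw [map_one, map_one]; exact ⟨1, Or.inl rfl, by simp⟩
      · subst hm
        have hgen : Monoid.CoprodI.of (i := s) (Multiplicative.ofAdd (1 : ZMod 2)) = gen k s := rfl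
        rw [hgen]
        by_cases hsi : s = i
        · subst hsi
          refine ⟨-1, Or.inr rfl, fun n => ?_⟩
          rw [hρi n, hρi 0]; ring
        · by_cases hsj : s = j
          · subst hsj
            refine ⟨-1, Or.inr rfl, fun n => ?_⟩
            rw [hρj n, hρj 0]; ring
          · refine ⟨1, Or.inl rfl, fun n => ?_⟩
            rw [hρs s hsi hsj]; simp
    | mul x y hx hy =>
      obtain ⟨ε₁, hε₁, h₁⟩ := hx
      obtain ⟨ε₂, hε₂, h₂⟩ := hy
      refine ⟨ε₁ * ε₂, ?_, fun n => ?_⟩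
      · rcases hε₁ with h | h <;> rcases hε₂ with h' | h' <;> subst h <;> subst h' <;> simp
      · rw [map_mul, Equiv.Perm.mul_apply, Equiv.Perm.mul_apply, h₂ n, h₁ (ε₂ * n + ρ y 0),
          h₁ (ρ y 0), h₂ 0]
        ring
  -- neighbor coset indices
  have hci : ∀ (x : G k) (s : Fin (k + 1)),
      cosetIdx ρ (x * gen k s) = ρ x (ρ (gen k s) 0) := by
    intro x s
    simp [cosetIdx, map_mul, Equiv.Perm.mul_apply]
  -- Step C: the main difference relation
  have hD : ∀ x : G k,
      (g (cosetIdx ρ x + 1) - g (cosetIdx ρ x)) / ϱ (cosetIdx ρ x)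
        = (g (cosetIdx ρ x) - g (cosetIdx ρ x - 1)) / ϱ (cosetIdx ρ x - 1) := by
    intro x
    set n := cosetIdx ρ x with hn
    obtain ⟨ε, hε, hε'⟩ := haff x
    have hxi : cosetIdx ρ (x * gen k i) = ε + n := by
      rw [hci x i, hρi 0]; norm_num [hε' 1, hn, cosetIdx]
    have hxj : cosetIdx ρ (x * gen k j) = -ε + n := by
      rw [hci x j, hρj 0]; norm_num [hε' (-1), hn, cosetIdx]
    have hsum := hharm x
    rw [pLap] at hsum
    have hzero : ∀ s ∈ (Finset.univ : Finset (Fin (k + 1))), s ∉ ({i, j} : Finset (Fin (k+1))) →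
        phiP p ((g (cosetIdx ρ (x * gen k s)) - g (cosetIdx ρ x)) / r (x, x * gen k s)) = 0 := by
      intro s _ hs
      simp only [Finset.mem_insert, Finset.mem_singleton, not_or] at hs
      have : cosetIdx ρ (x * gen k s) = cosetIdx ρ x := by
        rw [hci x s, hρs s hs.1 hs.2]
        simp [cosetIdx]
      rw [this]
      simp [phiP]
    have hsplit : (∑ s : Fin (k + 1),
        phiP p ((g (cosetIdx ρ (x * gen k s)) - g (cosetIdx ρ x)) / r (x, x * gen k s)))
        = phiP p ((g (cosetIdx ρ (x * gen k i)) - g (cosetIdx ρ x)) / r (x, x * gen k i))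
          + phiP p ((g (cosetIdx ρ (x * gen k j)) - g (cosetIdx ρ x)) / r (x, x * gen k j)) := by
      exact (Finset.sum_subset (Finset.subset_univ _)
        (fun s hs hns => hzero s hs hns)).symm.trans (Finset.sum_pair hij)
    rw [hsplit] at hsum
    -- resistances
    have hgoalaux : (g n - g (n - 1)) / ϱ (n - 1) = -((g (n - 1) - g n) / ϱ (n - 1)) := by
      ring
    rcases hε with hε | hε
    · subst hε
      have h1 : r (x, x * gen k i) = ϱ n := by
        rw [hrϱ x (x * gen k i) (by rw [hxi]; ring)]
      have h2 : r (x, x * gen k j) = ϱ (n - 1) := by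
        rw [hr_symm, hrϱ (x * gen k j) x (by rw [hxj]; ring), hxj]
        congr 1
        ring
      have e1 : (1 : ℤ) + n = n + 1 := by ring
      have e2 : (-1 : ℤ) + n = n - 1 := by ring
      rw [hxi, hxj, h1, h2, e1, e2, ← hn] at hsum
      have key := phiP_add_eq_zero hp1 hsum
      rw [hgoalaux]
      linarith [key]
    · subst hε
      have h1 : r (x, x * gen k j) = ϱ n := by
        rw [hrϱ x (x * gen k j) (by rw [hxj]; ring)]
      have h2 : r (x, x * gen k i) = ϱ (n - 1) := by
        rw [hr_symm, hrϱ (x * gen k i) x (by rw [hxi]; ring), hxi]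
        congr 1
        ring
      have e1 : -(-1 : ℤ) + n = n + 1 := by ring
      have e2 : (-1 : ℤ) + n = n - 1 := by ring
      rw [hxi, hxj, h1, h2, e1, e2, ← hn] at hsum
      have key := phiP_add_eq_zero hp1 hsum
      rw [hgoalaux]
      linarith [key]
  -- Step B: surjectivity of cosetIdx
  have hsurj : ∀ n : ℤ, ∃ x : G k, cosetIdx ρ x = n := by
    have hstep : ∀ x : G k, (∃ y : G k, cosetIdx ρ y = cosetIdx ρ x + 1)
        ∧ (∃ y : G k, cosetIdx ρ y = cosetIdx ρ x - 1) := by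
      intro x
      obtain ⟨ε, hε, hε'⟩ := haff x
      have hxi : cosetIdx ρ (x * gen k i) = ε + cosetIdx ρ x := by
        rw [hci x i, hρi 0]; norm_num [hε' 1, cosetIdx]
      have hxj : cosetIdx ρ (x * gen k j) = -ε + cosetIdx ρ x := by
        rw [hci x j, hρj 0]; norm_num [hε' (-1), cosetIdx]
      rcases hε with hε | hε <;> subst hε
      · exact ⟨⟨x * gen k i, by rw [hxi]; ring⟩, ⟨x * gen k j, by rw [hxj]; ring⟩⟩
      · exact ⟨⟨x * gen k j, by rw [hxj]; ring⟩, ⟨x * gen k i, by rw [hxi]; ring⟩⟩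
    intro n
    induction n using Int.induction_on with
    | zero => exact ⟨1, by simp [cosetIdx]⟩
    | succ m ih =>
      obtain ⟨x, hx⟩ := ih
      obtain ⟨⟨y, hy⟩, -⟩ := hstep x
      exact ⟨y, by rw [hy, hx]⟩
    | pred m ih =>
      obtain ⟨x, hx⟩ := ih
      obtain ⟨-, ⟨y, hy⟩⟩ := hstep x
      exact ⟨y, by rw [hy, hx]⟩
  -- conclude
  have hDn : ∀ n : ℤ, (g (n + 1) - g n) / ϱ n = (g n - g (n - 1)) / ϱ (n - 1) := by
    intro n
    obtain ⟨x, hx⟩ := hsurj n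
    have := hD x
    rwa [hx] at this
  refine ⟨(g 1 - g 0) / ϱ 0, fun n => ?_⟩
  have hconst : ∀ n : ℤ, (g (n + 1) - g n) / ϱ n = (g 1 - g 0) / ϱ 0 := by
    intro n
    induction n using Int.induction_on with
    | zero => norm_num
    | succ m ih =>
      have := hDn (m + 1)
      simp only [add_sub_cancel_right] at this
      rw [this, ih]
    | pred m ih =>
      have step := hDn (-m)
      rw [ih] at step
      simpa using step.symm
  have := hconst n
  rw [div_eq_iff (hϱ_pos n).ne'] at this
  exact this
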